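/- Let π be a path with e edges and v internal vertices, where each edge contributes a rotation in ℤ, the sum of absolute values of all edge rotations is at most m, and each internal vertex contributes a rotation in {-2,-1,0,1,2}, with the property that every internal vertex of rotation 2 can be charged a rotation of -1 from one of its two incident path edges (distinct vertices charging distinct edge-ends). If v ≤ Δ_F - 2, then the total rotation of π is at most m + Δ_F - 2. -/

import Mathlib

/-- consider a path with `e` edges and `v` internal vertices.
Each edge `j` has rotation `a j + b j + mid j`, where `a j, b j ∈ {-1,0,1}` are
the rotations at its two ends and `mid j` is the rotation in its middle; the
total number of bends `∑ (|a j| + |b j| + |mid j|)` is at most `m`.  Each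
internal vertex has rotation in `[-2,2]`, and every internal vertex of
rotation 2 is charged an edge-end of rotation -1 (distinct vertices charging
distinct edge-ends, i.e. the charging map is injective).  If `v ≤ Δ_F - 2`,
then the total rotation of the path is at most `m + Δ_F - 2`. -/
theorem path_rotation_bound_optimal (e v : ℕ) (m ΔF : ℤ)
    (a b mid : Fin e → ℤ) (vr : Fin v → ℤ)
    (ha : ∀ j, a j = -1 ∨ a j = 0 ∨ a j = 1)
    (hb : ∀ j, b j = -1 ∨ b j = 0 ∨ b j = 1)
    (hbends : ∑ j, (|a j| + |b j| + |mid j|) ≤ m)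
    (hvr : ∀ i, -2 ≤ vr i ∧ vr i ≤ 2)
    (charge : {i : Fin v // vr i = 2} → Fin e × Bool)
    (hinj : Function.Injective charge)
    (hcharge : ∀ i, (if (charge i).2 then a (charge i).1 else b (charge i).1) = -1)
    (hv : (v : ℤ) ≤ ΔF - 2) :
    (∑ j, (a j + b j + mid j)) + (∑ i, vr i) ≤ m + ΔF - 2 := by
  classical
  set f : Fin e × Bool → ℤ := fun p => if p.2 then a p.1 else b p.1 with hf
  set T : Finset (Fin e × Bool) := Finset.univ.image charge with hT
  have hcardT : (T.card : ℤ) = ((Finset.univ.filter (fun i => vr i = 2)).card : ℤ) := by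
    rw [hT, Finset.card_image_of_injective _ hinj]
    simp [Fintype.card_subtype]
  -- vertex sum bound
  have hvsum : ∑ i, vr i ≤ (v : ℤ) + (T.card : ℤ) := by
    have h1 : ∑ i, vr i ≤ ∑ i, ((1 : ℤ) + if vr i = 2 then 1 else 0) := by
      apply Finset.sum_le_sum
      intro i _
      have := (hvr i).2
      by_cases h : vr i = 2 <;> simp [h] <;> omega
    rw [Finset.sum_add_distrib] at h1
    simpa [Finset.sum_boole, hcardT] using h1
  -- edge sum bound
  have hTsub : T ⊆ Finset.univ := Finset.subset_univ T
  have hTval : ∀ p ∈ T, f p = -1 := by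
    intro p hp
    rw [hT, Finset.mem_image] at hp
    obtain ⟨i, _, rfl⟩ := hp
    simpa [hf] using hcharge i
  have hkey : 2 * (T.card : ℤ) ≤ ∑ p, (|f p| - f p) := by
    have h2 : ∑ p ∈ T, (|f p| - f p) ≤ ∑ p ∈ Finset.univ, (|f p| - f p) := by
      apply Finset.sum_le_sum_of_subset_of_nonneg hTsub
      intro p _ _
      have := abs_nonneg (f p)
      have := le_abs_self (f p)
      omega
    calc 2 * (T.card : ℤ) = ∑ p ∈ T, (2 : ℤ) := by
          rw [Finset.sum_const]; ring
      _ = ∑ p ∈ T, (|f p| - f p) := by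
          apply Finset.sum_congr rfl
          intro p hp; rw [hTval p hp]; norm_num
      _ ≤ _ := h2
  have hsplit : ∑ j, (a j + b j + mid j) = (∑ p, f p) + ∑ j, mid j := by
    rw [Fintype.sum_prod_type, ← Finset.sum_add_distrib]
    apply Finset.sum_congr rfl
    intro j _
    simp [Fintype.sum_bool, hf]
  have habs : (∑ p, |f p|) + ∑ j, |mid j| ≤ m := by
    calc (∑ p, |f p|) + ∑ j, |mid j| = ∑ j, (|a j| + |b j| + |mid j|) := by
          rw [Fintype.sum_prod_type, ← Finset.sum_add_distrib]
          apply Finset.sum_congr rfl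
          intro j _
          simp [Fintype.sum_bool, hf]
      _ ≤ m := hbends
  have hmid : ∑ j, mid j ≤ ∑ j, |mid j| :=
    Finset.sum_le_sum fun j _ => le_abs_self _
  have hsum_sub : ∑ p, (|f p| - f p) = (∑ p, |f p|) - ∑ p, f p :=
    Finset.sum_sub_distrib _ _
  rw [hsum_sub] at hkey
  rw [hsplit]
  omega
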